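/- Let U ∈ SO(3), Λ = diag(1,−1,−1), and e₁ the first standard basis vector of ℝ³. Define Q(s) = UΛU^T exp(s (U e₁)^×) and f(s) = tr(I₃ − Q(s)). Then f(0) = 4, f′(0) = 0, and f″(0) = −2; in particular, for all sufficiently small s ≠ 0, tr(I₃ − Q(s)) < 4, so the equilibrium R = UΛU^T is not a local minimum of R ↦ tr(I₃ − R) restricted near {R : tr(R) = −1}. -/

import Mathlib

open Matrix

noncomputable section

/-- Index type for 5×5 block matrices with blocks of sizes 3 and 2. -/
abbrev Idx : Type := Fin 3 ⊕ Fin 2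

/-- The 3×3 skew-symmetric matrix `Ω^×` of a vector `Ω ∈ ℝ³`. -/
def skew (Ω : Fin 3 → ℝ) : Matrix (Fin 3) (Fin 3) ℝ :=
  !![0, -Ω 2, Ω 1; Ω 2, 0, -Ω 0; -Ω 1, Ω 0, 0]

/-- Membership in the special orthogonal group SO(3). -/
def SO3 (R : Matrix (Fin 3) (Fin 3) ℝ) : Prop := Rᵀ * R = 1 ∧ R.det = 1

/-- The block matrix `[[R, V], [0, A]]`. -/
def mkAff (R : Matrix (Fin 3) (Fin 3) ℝ) (V : Matrix (Fin 3) (Fin 2) ℝ)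
    (A : Matrix (Fin 2) (Fin 2) ℝ) : Matrix Idx Idx ℝ := fromBlocks R V 0 A

/-- Membership in the extended similarity group SIM₂(3). -/
def inSIM23 (Z : Matrix Idx Idx ℝ) : Prop :=
  ∃ R V A, SO3 R ∧ IsUnit A.det ∧ Z = mkAff R V A

/-- Membership in the extended special Euclidean group SE₂(3). -/
def inSE23 (X : Matrix Idx Idx ℝ) : Prop :=
  ∃ R V, SO3 R ∧ X = mkAff R V 1

/-- The Lie algebra element `[[Ω^×, W], [0, S]]`. -/
def mkAlg (Ω : Fin 3 → ℝ) (W : Matrix (Fin 3) (Fin 2) ℝ)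
    (S : Matrix (Fin 2) (Fin 2) ℝ) : Matrix Idx Idx ℝ := fromBlocks (skew Ω) W 0 S

/-- The 3×2 matrix with columns `a` and `b`. -/
def two (a b : Fin 3 → ℝ) : Matrix (Fin 3) (Fin 2) ℝ := Matrix.of fun i j => ![a i, b i] j

attribute [local instance] Matrix.normedAddCommGroup Matrix.normedSpace

open NormedSpace in
/-- The unital ℝ-algebra morphism `(t, z) ↦ [[t,0,0],[0,Re z,-Im z],[0,Im z,Re z]]`. -/
def Phi : (ℝ × ℂ) →ₐ[ℝ] Matrix (Fin 3) (Fin 3) ℝ where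
  toFun p := !![p.1, 0, 0; 0, p.2.re, -p.2.im; 0, p.2.im, p.2.re]
  map_one' := by
    ext i j
    fin_cases i <;> fin_cases j <;> simp [Matrix.one_apply, Matrix.vecHead, Matrix.vecTail]
  map_mul' p q := by
    ext i j
    fin_cases i <;> fin_cases j <;>
      simp [Matrix.mul_apply, Fin.sum_univ_succ, Complex.mul_re, Complex.mul_im,
        Matrix.vecHead, Matrix.vecTail] <;> ring
  map_zero' := by
    ext i j; fin_cases i <;> fin_cases j <;> simp [Matrix.vecHead, Matrix.vecTail]
  map_add' p q := by
    ext i j; fin_cases i <;> fin_cases j <;> simp [Matrix.vecHead, Matrix.vecTail] <;> ring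
  commutes' r := by
    ext i j
    fin_cases i <;> fin_cases j <;>
      simp [Matrix.algebraMap_eq_diagonal, Matrix.diagonal, Complex.ofReal_re,
        Complex.ofReal_im, Matrix.vecHead, Matrix.vecTail]

open NormedSpace in
/-- The matrix exponential of `s • e₁^×` is the rotation about the `x`-axis by angle `s`. -/
lemma exp_rot (s : ℝ) : exp (s • skew ![1,0,0]) =
    !![1,0,0; 0, Real.cos s, -(Real.sin s); 0, Real.sin s, Real.cos s] := by
  letI : SeminormedRing (Matrix (Fin 3) (Fin 3) ℝ) := Matrix.linftyOpSemiNormedRing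
  letI : NormedRing (Matrix (Fin 3) (Fin 3) ℝ) := Matrix.linftyOpNormedRing
  letI : NormedAlgebra ℝ (Matrix (Fin 3) (Fin 3) ℝ) := Matrix.linftyOpNormedAlgebra
  have hc : Continuous Phi := Phi.toLinearMap.continuous_of_finiteDimensional
  have h1 : s • skew ![1,0,0] = Phi (0, s * Complex.I) := by
    ext i j
    fin_cases i <;> fin_cases j <;> simp [skew, Phi, Matrix.vecHead, Matrix.vecTail]
  rw [h1]; erw [← map_exp Phi hc]
  have h2 : exp ((0 : ℝ), s * Complex.I) = (1, Complex.exp (s * Complex.I)) := by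
    have := Prod.fst_exp ((0:ℝ), s * Complex.I)
    have h3 := Prod.snd_exp ((0:ℝ), s * Complex.I)
    refine Prod.ext ?_ ?_
    · rw [this]; simp [exp_zero]
    · rw [h3]; simp only
      rw [← Complex.exp_eq_exp_ℂ]
  rw [h2, Complex.exp_mul_I]
  ext i j
  fin_cases i <;> fin_cases j <;>
    simp [Phi, Matrix.vecHead, Matrix.vecTail, Complex.cos_ofReal_re, Complex.sin_ofReal_re]

/-- For `U ∈ SO(3)`, `(U e₁)^× = U e₁^× Uᵀ`. -/
lemma skew_conj {U : Matrix (Fin 3) (Fin 3) ℝ} (hU : SO3 U) :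
    skew (U.mulVec ![1,0,0]) = U * skew ![1,0,0] * Uᵀ := by
  have hadj : U.adjugate = Uᵀ := by
    calc U.adjugate = Uᵀ * (U * U.adjugate) := by rw [← mul_assoc, hU.1, one_mul]
    _ = Uᵀ * (U.det • 1) := by rw [Matrix.mul_adjugate]
    _ = Uᵀ := by rw [hU.2, one_smul, mul_one]
  rw [Matrix.adjugate_fin_three] at hadj
  have h := fun i j => congrFun (congrFun hadj i) j
  have h00 := h 0 0; have h01 := h 0 1; have h02 := h 0 2
  have h10 := h 1 0; have h11 := h 1 1; have h12 := h 1 2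
  have h20 := h 2 0; have h21 := h 2 1; have h22 := h 2 2
  simp [Matrix.vecHead, Matrix.vecTail, Matrix.transpose_apply] at h00 h01 h02 h10 h11 h12 h20 h21 h22
  ext i j
  fin_cases i <;> fin_cases j <;>
    simp [skew, Matrix.mulVec, Matrix.mul_apply, dotProduct, Fin.sum_univ_succ,
      Matrix.vecHead, Matrix.vecTail, Matrix.transpose_apply] <;>
    linarith

/-- instability of the equilibria with `tr(R) = −1`: with
`Q(s) = UΛUᵀ exp(s(Ue₁)^×)` and `f(s) = tr(I₃ − Q(s))`, one has `f(0) = 4`, `f′(0) = 0`,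
`f″(0) = −2`, so `tr(I₃ − Q(s)) < 4` for all sufficiently small `s ≠ 0`. -/
theorem unstable_equilibrium_taylor (U : Matrix (Fin 3) (Fin 3) ℝ) (hU : SO3 U) :
    let Λ : Matrix (Fin 3) (Fin 3) ℝ := Matrix.diagonal ![1, -1, -1]
    let e₁ : Fin 3 → ℝ := ![1, 0, 0]
    let Q : ℝ → Matrix (Fin 3) (Fin 3) ℝ :=
      fun s => U * Λ * Uᵀ * NormedSpace.exp (s • skew (U.mulVec e₁))
    let f : ℝ → ℝ := fun s => (1 - Q s).trace
    f 0 = 4 ∧ deriv f 0 = 0 ∧ deriv (deriv f) 0 = -2 ∧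
      ∀ᶠ s in nhdsWithin 0 {0}ᶜ, f s < 4 := by
  intro Λ e₁ Q f
  have hUinv : U⁻¹ = Uᵀ := Matrix.inv_eq_left_inv hU.1
  have hUunit : IsUnit U := (Matrix.isUnit_iff_isUnit_det U).mpr (by rw [hU.2]; exact isUnit_one)
  have hfs : ∀ s, f s = 2 + 2 * Real.cos s := by
    intro s
    have h1 : s • skew (U.mulVec e₁) = U * (s • skew ![1,0,0]) * U⁻¹ := by
      rw [hUinv, skew_conj hU]
      simp [Matrix.smul_mul, Matrix.mul_smul]
    have h2 : NormedSpace.exp (s • skew (U.mulVec e₁)) =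
        U * !![1,0,0; 0, Real.cos s, -(Real.sin s); 0, Real.sin s, Real.cos s] * Uᵀ := by
      rw [h1, Matrix.exp_conj U _ hUunit, exp_rot, hUinv]
    show (1 - Q s).trace = 2 + 2 * Real.cos s
    have h3 : Q s = U * (Λ * !![1,0,0; 0, Real.cos s, -(Real.sin s); 0, Real.sin s, Real.cos s]) * Uᵀ := by
      show U * Λ * Uᵀ * NormedSpace.exp (s • skew (U.mulVec e₁)) = _
      rw [h2]
      rw [show U * Λ * Uᵀ * (U * !![1,0,0; 0, Real.cos s, -(Real.sin s); 0, Real.sin s, Real.cos s] * Uᵀ)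
        = U * Λ * (Uᵀ * U) * !![1,0,0; 0, Real.cos s, -(Real.sin s); 0, Real.sin s, Real.cos s] * Uᵀ by
          noncomm_ring]
      rw [hU.1, mul_one]; noncomm_ring
    rw [Matrix.trace_sub, Matrix.trace_one, h3, Matrix.trace_mul_cycle, ← mul_assoc, hU.1, one_mul]
    simp [Matrix.trace, Matrix.diag, Matrix.mul_apply, Fin.sum_univ_succ, Matrix.diagonal,
      Matrix.vecHead, Matrix.vecTail, Λ]
    ring
  have hfe : f = fun s => 2 + 2 * Real.cos s := funext hfs
  have hd1 : ∀ x : ℝ, HasDerivAt (fun s => 2 + 2 * Real.cos s) (2 * -Real.sin x) x := fun x => by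
    exact ((hasDerivAt_const x (2:ℝ)).add ((Real.hasDerivAt_cos x).const_mul 2)).congr_deriv (by ring)
  have hderiv : deriv f = fun x => 2 * -Real.sin x := by
    rw [hfe]; exact funext fun x => (hd1 x).deriv
  refine ⟨?_, ?_, ?_, ?_⟩
  · rw [hfs 0]; norm_num
  · rw [hderiv]; simp
  · rw [hderiv]
    have hd2 : HasDerivAt (fun x => 2 * -Real.sin x) (2 * -Real.cos 0) 0 := by
      simpa using ((Real.hasDerivAt_sin 0).neg.const_mul 2)
    rw [hd2.deriv]; norm_num
  · have hmem : Set.Ioo (-(2*Real.pi)) (2*Real.pi) ∈ nhds (0:ℝ) :=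
      Ioo_mem_nhds (by nlinarith [Real.pi_pos]) (by nlinarith [Real.pi_pos])
    filter_upwards [self_mem_nhdsWithin, mem_nhdsWithin_of_mem_nhds hmem] with s hs hs2
    have hsne : s ≠ 0 := hs
    have hcos : Real.cos s < 1 :=
      lt_of_le_of_ne (Real.cos_le_one s)
        (fun h => hsne ((Real.cos_eq_one_iff_of_lt_of_lt hs2.1 hs2.2).mp h))
    rw [hfs s]; linarith
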